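/- If TWO has a winning strategy in the Rothberger game on a topological space X, then X is productively Rothberger: for every topological space Y satisfying S_1(𝒪_Y, 𝒪_Y), the product space X × Y satisfies S_1(𝒪_{X×Y}, 𝒪_{X×Y}). -/

import Mathlib

open Set

/-- `GDom R` is the set of dominating families of the relation `R`:
sets `Z ⊆ B` such that every `a ∈ A` is dominated by some `b ∈ Z`. -/
def GDom {α β : Type*} (R : α → β → Prop) : Set (Set β) :=
  {Z | ∀ a : α, ∃ b ∈ Z, R a b}

/-- A relation is total: every element of the domain is dominated by something. -/
def IsTotalRel {α β : Type*} (R : α → β → Prop) : Prop :=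
  ∀ a : α, ∃ b : β, R a b

/-- The product of two relations. -/
def GProd {α β α' β' : Type*} (R : α → β → Prop) (R' : α' → β' → Prop) :
    α × α' → β × β' → Prop :=
  fun a b => R a.1 b.1 ∧ R' a.2 b.2

/-- The finite history consisting of the first `n` moves of the sequence `b`. -/
def GHist {β : Type*} (b : ℕ → β) (n : ℕ) : List β :=
  List.ofFn fun i : Fin n => b i

/-- ONE has a winning strategy in the game `G(P,Q)`: in inning `n` ONE plays `aₙ ∈ A`,
TWO answers `bₙ` with `R aₙ bₙ`; ONE wins iff `{bₙ : n} ∈ GDom T`. -/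
def OneWinsG {α β γ : Type*} (R : α → β → Prop) (T : γ → β → Prop) : Prop :=
  ∃ σ : List β → α, ∀ b : ℕ → β,
    (∀ n, R (σ (GHist b n)) (b n)) → Set.range b ∈ GDom T

/-- TWO has a winning strategy in the game `G(P,Q)`. -/
def TwoWinsG {α β γ : Type*} (R : α → β → Prop) (T : γ → β → Prop) : Prop :=
  ∃ τ : List α → β, ∀ a : ℕ → α,
    (∀ n, R (a n) (τ (GHist a (n + 1)))) ∧
    Set.range (fun n => τ (GHist a (n + 1))) ∉ GDom T

/-- ONE has a winning strategy in the game `G₁(𝒜,ℬ)`: in inning `n` ONE plays `Aₙ ∈ 𝒜`,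
TWO answers `bₙ ∈ Aₙ`; TWO wins iff `{bₙ : n} ∈ ℬ`. -/
def OneWinsG1 {β : Type*} (𝒜 ℬ : Set (Set β)) : Prop :=
  ∃ σ : List β → Set β, (∀ h, σ h ∈ 𝒜) ∧
    ∀ b : ℕ → β, (∀ n, b n ∈ σ (GHist b n)) → Set.range b ∉ ℬ

/-- TWO has a winning strategy in the game `G₁(𝒜,ℬ)`. -/
def TwoWinsG1 {β : Type*} (𝒜 ℬ : Set (Set β)) : Prop :=
  ∃ τ : List (Set β) → β, ∀ S : ℕ → Set β, (∀ n, S n ∈ 𝒜) →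
    (∀ n, τ (GHist S (n + 1)) ∈ S n) ∧
    Set.range (fun n => τ (GHist S (n + 1))) ∈ ℬ

/-- TWO has a winning strategy in the game `G_fin(𝒜,ℬ)`: in inning `n` ONE plays `Aₙ ∈ 𝒜`,
TWO answers a finite `Fₙ ⊆ Aₙ`; TWO wins iff `⋃ₙ Fₙ ∈ ℬ`. -/
def TwoWinsGfin {β : Type*} (𝒜 ℬ : Set (Set β)) : Prop :=
  ∃ τ : List (Set β) → Set β, ∀ S : ℕ → Set β, (∀ n, S n ∈ 𝒜) →
    (∀ n, τ (GHist S (n + 1)) ⊆ S n ∧ (τ (GHist S (n + 1))).Finite) ∧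
    (⋃ n, τ (GHist S (n + 1))) ∈ ℬ

/-- `(𝒜,ℬ)`-Lindelöf: every member of `𝒜` has a countable subset belonging to `ℬ`. -/
def LindelofFam {β : Type*} (𝒜 ℬ : Set (Set β)) : Prop :=
  ∀ S ∈ 𝒜, ∃ C ⊆ S, C.Countable ∧ C ∈ ℬ

/-- The selection principle `S₁(𝒜,ℬ)`. -/
def SelS1 {β : Type*} (𝒜 ℬ : Set (Set β)) : Prop :=
  ∀ A : ℕ → Set β, (∀ n, A n ∈ 𝒜) →
    ∃ b : ℕ → β, (∀ n, b n ∈ A n) ∧ Set.range b ∈ ℬ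

/-- The selection principle `S_fin(𝒜,ℬ)`. -/
def SelSfin {β : Type*} (𝒜 ℬ : Set (Set β)) : Prop :=
  ∀ A : ℕ → Set β, (∀ n, A n ∈ 𝒜) →
    ∃ F : ℕ → Set β, (∀ n, F n ⊆ A n ∧ (F n).Finite) ∧ (⋃ n, F n) ∈ ℬ

/-- `𝒪_X`: the family of open covers of `X`. -/
def OpenCovers (X : Type*) [TopologicalSpace X] : Set (Set (Set X)) :=
  {𝒰 | (∀ U ∈ 𝒰, IsOpen U) ∧ ⋃₀ 𝒰 = Set.univ}

/-- ONE has a winning strategy in the point-open game on `X`. -/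
def OneWinsPointOpen (X : Type*) [TopologicalSpace X] : Prop :=
  ∃ σ : List (Set X) → X, ∀ U : ℕ → Set X,
    (∀ n, IsOpen (U n) ∧ σ (GHist U n) ∈ U n) → Set.range U ∈ OpenCovers X

/-- TWO has a winning strategy in the point-open game on `X`. -/
def TwoWinsPointOpen (X : Type*) [TopologicalSpace X] : Prop :=
  ∃ τ : List X → Set X, ∀ x : ℕ → X,
    (∀ n, IsOpen (τ (GHist x (n + 1))) ∧ x n ∈ τ (GHist x (n + 1))) ∧
    Set.range (fun n => τ (GHist x (n + 1))) ∉ OpenCovers X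

/-- `𝔇_X`: the family of dense subsets of `X`. -/
def DenseSets (X : Type*) [TopologicalSpace X] : Set (Set X) :=
  {D | Dense D}

/-- ONE has a winning strategy in the point-picking game `G^D_ω(X)` of Berner and Juhász. -/
def OneWinsPointPicking (X : Type*) [TopologicalSpace X] : Prop :=
  ∃ σ : List X → Set X, (∀ h, IsOpen (σ h) ∧ (σ h).Nonempty) ∧
    ∀ x : ℕ → X, (∀ n, x n ∈ σ (GHist x n)) → Dense (Set.range x)

/-- TWO has a winning strategy in the point-picking game `G^D_ω(X)`. -/
def TwoWinsPointPicking (X : Type*) [TopologicalSpace X] : Prop :=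
  ∃ τ : List (Set X) → X, ∀ U : ℕ → Set X,
    (∀ n, IsOpen (U n) ∧ (U n).Nonempty) →
    (∀ n, τ (GHist U (n + 1)) ∈ U n) ∧
    ¬ Dense (Set.range fun n => τ (GHist U (n + 1)))

/-- `𝒟_X`: families of open sets whose union is dense in `X`. -/
def DenseUnionFams (X : Type*) [TopologicalSpace X] : Set (Set (Set X)) :=
  {𝒰 | (∀ U ∈ 𝒰, IsOpen U) ∧ Dense (⋃₀ 𝒰)}

/-- ONE has a winning strategy in Tkachuk's game `θ(X)`. -/
def OneWinsTheta (X : Type*) [TopologicalSpace X] : Prop :=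
  ∃ σ : List (Set X) → X, ∀ U : ℕ → Set X,
    (∀ n, IsOpen (U n) ∧ σ (GHist U n) ∈ U n) → Dense (⋃ n, U n)

/-- TWO has a winning strategy in Tkachuk's game `θ(X)`. -/
def TwoWinsTheta (X : Type*) [TopologicalSpace X] : Prop :=
  ∃ τ : List X → Set X, ∀ x : ℕ → X,
    (∀ n, IsOpen (τ (GHist x (n + 1))) ∧ x n ∈ τ (GHist x (n + 1))) ∧
    ¬ Dense (⋃ n, τ (GHist x (n + 1)))

/-- `Ω_x`: the family of subsets of `X` having `x` in their closure. -/
def OmegaPt {X : Type*} [TopologicalSpace X] (x : X) : Set (Set X) :=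
  {A | x ∈ closure A}

/-- ONE has a winning strategy in Gruenhage's game `G^c_{O,P}(X,x)`. -/
def OneWinsGruenhage {X : Type*} [TopologicalSpace X] (x : X) : Prop :=
  ∃ σ : List X → Set X, (∀ h, IsOpen (σ h) ∧ x ∈ σ h) ∧
    ∀ y : ℕ → X, (∀ n, y n ∈ σ (GHist y n)) → x ∈ closure (Set.range y)

/-- TWO has a winning strategy in Gruenhage's game `G^c_{O,P}(X,x)`. -/
def TwoWinsGruenhage {X : Type*} [TopologicalSpace X] (x : X) : Prop :=
  ∃ τ : List (Set X) → X, ∀ V : ℕ → Set X,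
    (∀ n, IsOpen (V n) ∧ x ∈ V n) →
    (∀ n, τ (GHist V (n + 1)) ∈ V n) ∧
    x ∉ closure (Set.range fun n => τ (GHist V (n + 1)))

/-- ONE has a winning strategy in the compact-open game on `X`. -/
def OneWinsCompactOpen (X : Type*) [TopologicalSpace X] : Prop :=
  ∃ σ : List (Set X) → Set X, (∀ h, IsCompact (σ h)) ∧
    ∀ U : ℕ → Set X, (∀ n, IsOpen (U n) ∧ σ (GHist U n) ⊆ U n) →
      (⋃ n, U n) = Set.univ

/-- `⪯` is downwards `P`-compatible. -/
def DownwardsCompat {α β : Type*} (R : α → β → Prop) (le : β → β → Prop) : Prop :=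
  ∀ a b₁ b₂, R a b₁ → R a b₂ → ∃ b, R a b ∧ le b b₁ ∧ le b b₂

/-- `⪯` is upwards `Q`-compatible. -/
def UpwardsCompat {γ β : Type*} (T : γ → β → Prop) (le : β → β → Prop) : Prop :=
  ∀ c b₁ b₂, T c b₁ → le b₁ b₂ → T c b₂

/-- `⪯` is countably downwards `P`-compatible. -/
def CountablyDownwardsCompat {α β : Type*} (R : α → β → Prop) (le : β → β → Prop) : Prop :=
  ∀ a, ∀ E : Set β, E.Countable → E.Nonempty → (∀ b ∈ E, R a b) →
    ∃ b', R a b' ∧ ∀ b ∈ E, le b' b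

/-- A relation is `ℵ₀`-preserving if some partial order on `B` is both upwards
compatible and countably downwards compatible with it. -/
def Aleph0Preserving {α β : Type*} (R : α → β → Prop) : Prop :=
  ∃ le : β → β → Prop, IsPartialOrder β le ∧
    UpwardsCompat R le ∧ CountablyDownwardsCompat R le

/-- `Dom_γ(T)`: the γ-dominating sequences of the relation `T`. -/
def GDomGamma {γ β : Type*} (T : γ → β → Prop) : Set (ℕ → β) :=
  {z | ∀ c : γ, {n : ℕ | ¬ T c (z n)}.Finite}

/-- ONE has a winning strategy in the game `G_γ(P,Q)`. -/
def OneWinsGgamma {α β γ : Type*} (R : α → β → Prop) (T : γ → β → Prop) : Prop :=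
  ∃ σ : List β → α, ∀ b : ℕ → β,
    (∀ n, R (σ (GHist b n)) (b n)) → b ∈ GDomGamma T

/-- TWO has a winning strategy in the game `G_γ(P,Q)`. -/
def TwoWinsGgamma {α β γ : Type*} (R : α → β → Prop) (T : γ → β → Prop) : Prop :=
  ∃ τ : List α → β, ∀ a : ℕ → α,
    (∀ n, R (a n) (τ (GHist a (n + 1)))) ∧
    (fun n => τ (GHist a (n + 1))) ∉ GDomGamma T

/-- ONE has a winning strategy in the game `G₁(𝒜, Dom_γ(T))`. -/
def OneWinsG1gamma {β γ : Type*} (𝒜 : Set (Set β)) (T : γ → β → Prop) : Prop :=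
  ∃ σ : List β → Set β, (∀ h, σ h ∈ 𝒜) ∧
    ∀ b : ℕ → β, (∀ n, b n ∈ σ (GHist b n)) → b ∉ GDomGamma T

/-- TWO has a winning strategy in the game `G₁(𝒜, Dom_γ(T))`. -/
def TwoWinsG1gamma {β γ : Type*} (𝒜 : Set (Set β)) (T : γ → β → Prop) : Prop :=
  ∃ τ : List (Set β) → β, ∀ S : ℕ → Set β, (∀ n, S n ∈ 𝒜) →
    (∀ n, τ (GHist S (n + 1)) ∈ S n) ∧
    (fun n => τ (GHist S (n + 1))) ∈ GDomGamma T

/-- The `ℵ₀`-modification of a relation: moves become nonempty countable subsets of `B`,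
dominated pointwise. -/
def CountMod {α β : Type*} (R : α → β → Prop) :
    α → {E : Set β // E.Countable ∧ E.Nonempty} → Prop :=
  fun a E => ∀ b ∈ E.1, R a b

theorem ghist_succ {β : Type*} (b : ℕ → β) (n : ℕ) :
    GHist b (n + 1) = GHist b n ++ [b n] := by
  simp only [GHist]
  rw [List.ofFn_succ', List.concat_eq_append]
  simp

theorem ghist_pad {β : Type*} (l : List β) (z : β) :
    GHist (fun n => if hn : n < l.length then l.get ⟨n, hn⟩ else z) (l.length + 1)
      = l ++ [z] := by
  apply List.ext_getElem
  · simp [GHist]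
  · intro i h1 h2
    simp only [GHist, List.getElem_ofFn]
    by_cases hi : i < l.length
    · rw [dif_pos hi, List.getElem_append_left hi]
      simp
    · have hie : i = l.length := by
        simp [GHist] at h1; omega
      subst hie
      rw [dif_neg hi]
      rw [List.getElem_append_right (le_refl _)]
      simp

/-- Auxiliary history function: the list of covers ONE plays along a path in the tree. -/
noncomputable def auxHist {X : Type*} (Gc : List (Set (Set X)) → Set X → Set (Set X))
    (g : List (Set (Set X)) → X) (Uf : X → List ℕ → ℕ → Set X) : List ℕ → List (Set (Set X))
  | [] => []
  | i :: s => auxHist Gc g Uf s ++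
      [Gc (auxHist Gc g Uf s) (Uf (g (auxHist Gc g Uf s)) s i)]

/-- Auxiliary branch iterator. -/
def auxIter {β : Type*} (F : List β → β) : ℕ → List β
  | 0 => []
  | k + 1 => F (auxIter F k) :: auxIter F k

/-- If TWO has a winning strategy in the Rothberger game on `X`, then `X`
is productively Rothberger. -/
theorem statement8 {X : Type*} [TopologicalSpace X]
    (h : TwoWinsG1 (OpenCovers X) (OpenCovers X))
    (Y : Type*) [TopologicalSpace Y]
    (hY : SelS1 (OpenCovers Y) (OpenCovers Y)) :
    SelS1 (OpenCovers (X × Y)) (OpenCovers (X × Y)) := by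
  classical
  obtain ⟨τ, hτ⟩ := h
  -- X is nonempty (otherwise `h` is contradictory)
  have hXne : Nonempty X := by
    by_contra hX
    rw [not_nonempty_iff] at hX
    have hc : (∅ : Set (Set X)) ∈ OpenCovers X := by
      refine ⟨fun U hU => absurd hU (Set.notMem_empty U), ?_⟩
      rw [Set.sUnion_empty]
      exact (Set.univ_eq_empty_iff.mpr hX).symm
    exact absurd ((hτ (fun _ => ∅) fun _ => hc).1 0) (Set.notMem_empty _)
  -- Y is nonempty (otherwise `hY` is contradictory)
  have hYne : Nonempty Y := by
    by_contra hYn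
    rw [not_nonempty_iff] at hYn
    have hc : (∅ : Set (Set Y)) ∈ OpenCovers Y := by
      refine ⟨fun U hU => absurd hU (Set.notMem_empty U), ?_⟩
      rw [Set.sUnion_empty]
      exact (Set.univ_eq_empty_iff.mpr hYn).symm
    obtain ⟨b, hb1, _⟩ := hY (fun _ => ∅) (fun _ => hc)
    exact absurd (hb1 0) (Set.notMem_empty _)
  intro 𝒲 h𝒲
  -- Galvin's pointwise lemma
  have galvin : ∀ hl : List (Set (Set X)), (∀ C ∈ hl, C ∈ OpenCovers X) →
      ∃ x : X, ∀ U : Set X, IsOpen U → x ∈ U →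
        ∃ 𝒰, 𝒰 ∈ OpenCovers X ∧ τ (hl ++ [𝒰]) ⊆ U := by
    intro hl hcov
    by_contra hcon
    push_neg at hcon
    choose Ux hUo hUm hUb using hcon
    have h𝒰scov : Set.range Ux ∈ OpenCovers X := by
      constructor
      · rintro U ⟨x, rfl⟩; exact hUo x
      · apply Set.eq_univ_of_forall
        intro x
        exact Set.mem_sUnion.mpr ⟨Ux x, ⟨x, rfl⟩, hUm x⟩
    set S : ℕ → Set (Set X) :=
      fun n => if hn : n < hl.length then hl.get ⟨n, hn⟩ else Set.range Ux with hSdef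
    have hScov : ∀ n, S n ∈ OpenCovers X := by
      intro n
      by_cases hn : n < hl.length
      · simp only [hSdef, dif_pos hn]
        exact hcov _ (hl.get_mem _)
      · simp only [hSdef, dif_neg hn]
        exact h𝒰scov
    have hgh : GHist S (hl.length + 1) = hl ++ [Set.range Ux] := ghist_pad hl _
    have hwin := (hτ S hScov).1 hl.length
    rw [hgh] at hwin
    have hSl : S hl.length = Set.range Ux := by
      simp only [hSdef, dif_neg (lt_irrefl hl.length)]
    rw [hSl] at hwin
    obtain ⟨x₀, hx₀⟩ := hwin
    exact hUb x₀ (Set.range Ux) h𝒰scov (by rw [← hx₀])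
  have galvin' : ∀ hl : List (Set (Set X)), ∃ x : X, (∀ C ∈ hl, C ∈ OpenCovers X) →
      ∀ U : Set X, IsOpen U → x ∈ U →
        ∃ 𝒰, 𝒰 ∈ OpenCovers X ∧ τ (hl ++ [𝒰]) ⊆ U := by
    intro hl
    by_cases hcov : ∀ C ∈ hl, C ∈ OpenCovers X
    · obtain ⟨x, hx⟩ := galvin hl hcov
      exact ⟨x, fun _ => hx⟩
    · exact ⟨hXne.some, fun hc => absurd hc hcov⟩
  choose g hg using galvin'
  -- the cover ONE plays extending history `hl`, forcing TWO's answer inside `U`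
  have gcov : ∀ (hl : List (Set (Set X))) (U : Set X), ∃ 𝒰, 𝒰 ∈ OpenCovers X ∧
      ((∀ C ∈ hl, C ∈ OpenCovers X) → IsOpen U → g hl ∈ U → τ (hl ++ [𝒰]) ⊆ U) := by
    intro hl U
    by_cases hc : (∀ C ∈ hl, C ∈ OpenCovers X) ∧ IsOpen U ∧ g hl ∈ U
    · obtain ⟨𝒰, h1, h2⟩ := hg hl hc.1 U hc.2.1 hc.2.2
      exact ⟨𝒰, h1, fun _ _ _ => h2⟩
    · refine ⟨{Set.univ}, ⟨?_, ?_⟩, fun h1 h2 h3 => absurd ⟨h1, h2, h3⟩ hc⟩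
      · intro U hU
        rw [Set.mem_singleton_iff] at hU
        rw [hU]; exact isOpen_univ
      · simp
  choose Gc hGc1 hGc2 using gcov
  -- covers of Y tailored to a point of X and a scheduled product cover
  have hA : ∀ (x : X) (s : List ℕ) (i : ℕ),
      {V : Set Y | IsOpen V ∧ ∃ U : Set X, IsOpen U ∧ x ∈ U ∧
        ∃ W ∈ 𝒲 (Encodable.encode (s, i)), U ×ˢ V ⊆ W} ∈ OpenCovers Y := by
    intro x s i
    constructor
    · intro V hV; exact hV.1
    · apply Set.eq_univ_of_forall
      intro y
      have hmem : (x, y) ∈ ⋃₀ 𝒲 (Encodable.encode (s, i)) := by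
        rw [(h𝒲 (Encodable.encode (s, i))).2]; trivial
      obtain ⟨W, hWmem, hWxy⟩ := hmem
      have hWopen := (h𝒲 (Encodable.encode (s, i))).1 W hWmem
      rw [isOpen_prod_iff] at hWopen
      obtain ⟨u, v, hu, hv, hxu, hyv, huv⟩ := hWopen x y hWxy
      exact Set.mem_sUnion.mpr ⟨v, ⟨hv, u, hu, hxu, W, hWmem, huv⟩, hyv⟩
  have hVex : ∀ (x : X) (s : List ℕ), ∃ V : ℕ → Set Y,
      (∀ i, V i ∈ {V : Set Y | IsOpen V ∧ ∃ U : Set X, IsOpen U ∧ x ∈ U ∧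
        ∃ W ∈ 𝒲 (Encodable.encode (s, i)), U ×ˢ V ⊆ W}) ∧
      Set.range V ∈ OpenCovers Y :=
    fun x s => hY _ (fun i => hA x s i)
  choose V hV1 hV2 using hVex
  have hVex2 : ∀ (x : X) (s : List ℕ) (i : ℕ), ∃ U : Set X, IsOpen U ∧ x ∈ U ∧
      ∃ W, W ∈ 𝒲 (Encodable.encode (s, i)) ∧ U ×ˢ V x s i ⊆ W :=
    fun x s i => (hV1 x s i).2
  choose Uf hUo hUm Wc hWc1 hWc2 using hVex2
  -- choosing a member of the Y-cover containing a given point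
  have hpick : ∀ (x : X) (s : List ℕ) (y : Y), ∃ i, y ∈ V x s i := by
    intro x s y
    have hy : y ∈ ⋃₀ Set.range (V x s) := by rw [(hV2 x s).2]; trivial
    obtain ⟨_, ⟨i, rfl⟩, hyi⟩ := hy
    exact ⟨i, hyi⟩
  choose idx hidx using hpick
  -- all covers along any history are honest open covers
  have histcov : ∀ s : List ℕ, ∀ C ∈ auxHist Gc g Uf s, C ∈ OpenCovers X := by
    intro s
    induction s with
    | nil => intro C hC; simp [auxHist] at hC
    | cons i s ih =>
      intro C hC
      simp only [auxHist, List.mem_append, List.mem_singleton] at hC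
      rcases hC with hC | hC
      · exact ih C hC
      · rw [hC]; exact hGc1 _ _
  -- main coverage claim
  have main : ∀ (x : X) (y : Y), ∃ (s : List ℕ) (i : ℕ),
      (x, y) ∈ Wc (g (auxHist Gc g Uf s)) s i := by
    intro x y
    set Fy : List ℕ → ℕ := fun l => idx (g (auxHist Gc g Uf l)) l y with hFy
    set node : ℕ → List ℕ := auxIter Fy with hnode
    set S : ℕ → Set (Set X) := fun k =>
      Gc (auxHist Gc g Uf (node k))
        (Uf (g (auxHist Gc g Uf (node k))) (node k) (Fy (node k))) with hS
    have hhist_succ : ∀ k, auxHist Gc g Uf (node (k + 1)) =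
        auxHist Gc g Uf (node k) ++ [S k] := by
      intro k
      have : node (k + 1) = Fy (node k) :: node k := rfl
      rw [this]
      rfl
    have hGH : ∀ k, GHist S k = auxHist Gc g Uf (node k) := by
      intro k
      induction k with
      | zero =>
        have : node 0 = [] := rfl
        rw [this]
        simp [GHist, auxHist]
      | succ k ih => rw [ghist_succ, ih, ← hhist_succ]
    have hlegal : ∀ k, S k ∈ OpenCovers X := fun k => hGc1 _ _
    have hwin := (hτ S hlegal).2
    have hx : x ∈ ⋃₀ Set.range (fun n => τ (GHist S (n + 1))) := by
      rw [hwin.2]; trivial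
    obtain ⟨_, ⟨k, rfl⟩, hxk⟩ := hx
    have hsub : τ (GHist S (k + 1)) ⊆
        Uf (g (auxHist Gc g Uf (node k))) (node k) (Fy (node k)) := by
      rw [ghist_succ, hGH]
      exact hGc2 _ _ (histcov _) (hUo _ _ _) (hUm _ _ _)
    refine ⟨node k, Fy (node k), hWc2 _ _ _ ?_⟩
    exact Set.mem_prod.mpr ⟨hsub hxk, hidx _ _ y⟩
  -- arbitrary members for unused covers
  have hjunk : ∀ m : ℕ, ∃ J, J ∈ 𝒲 m := by
    intro m
    have hmem : (hXne.some, hYne.some) ∈ ⋃₀ 𝒲 m := by rw [(h𝒲 m).2]; trivial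
    obtain ⟨J, hJ, _⟩ := hmem
    exact ⟨J, hJ⟩
  choose junk hjunkmem using hjunk
  set b : ℕ → Set (X × Y) := fun m =>
    if hm : ∃ p : List ℕ × ℕ, Encodable.encode p = m then
      Wc (g (auxHist Gc g Uf hm.choose.1)) hm.choose.1 hm.choose.2
    else junk m with hb
  have hbmem : ∀ m, b m ∈ 𝒲 m := by
    intro m
    by_cases hm : ∃ p : List ℕ × ℕ, Encodable.encode p = m
    · simp only [hb, dif_pos hm]
      have hwc := hWc1 (g (auxHist Gc g Uf hm.choose.1)) hm.choose.1 hm.choose.2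
      have hpe : (hm.choose.1, hm.choose.2) = hm.choose := rfl
      rw [hpe, hm.choose_spec] at hwc
      exact hwc
    · simp only [hb, dif_neg hm]
      exact hjunkmem m
  refine ⟨b, hbmem, ?_, ?_⟩
  · rintro B ⟨m, rfl⟩
    exact (h𝒲 m).1 _ (hbmem m)
  · apply Set.eq_univ_of_forall
    rintro ⟨x, y⟩
    obtain ⟨s, i, hsi⟩ := main x y
    have hmex : ∃ p : List ℕ × ℕ, Encodable.encode p = Encodable.encode (s, i) :=
      ⟨(s, i), rfl⟩
    have hpe : hmex.choose = (s, i) := Encodable.encode_injective hmex.choose_spec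
    have hbv : b (Encodable.encode (s, i)) = Wc (g (auxHist Gc g Uf s)) s i := by
      simp only [hb, dif_pos hmex]
      rw [hpe]
    exact Set.mem_sUnion.mpr ⟨_, ⟨Encodable.encode (s, i), rfl⟩, hbv ▸ hsi⟩
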